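/- arXiv:1101.0333 — 4 statements merged into one kernel-verified Lean document; each statement's English description precedes it below -/
import Mathlib

section
/- Let E be a finite partially ordered set and P a stochastic matrix on E. Then P is ↑-Möbius monotone if and only if for every ↑-Möbius monotone function f : E → ℝ, the function e ↦ Σ_{e'∈E} P(e,e') f(e') is again ↑-Möbius monotone. -/
open Finset Matrix

/-- The zeta matrix of a finite poset: `C(e,e') = 1` if `e ≤ e'`, else `0`.
Its matrix inverse is the Möbius function of the poset. -/
noncomputable def zeta (E : Type*) [Fintype E] [PartialOrder E]
    [DecidableRel ((· ≤ ·) : E → E → Prop)] : Matrix E E ℝ :=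
  Matrix.of fun e e' => if e ≤ e' then 1 else 0

/-- `P` is a stochastic matrix: nonnegative entries, rows summing to 1. -/
def IsStochastic {E : Type*} [Fintype E] (P : Matrix E E ℝ) : Prop :=
  (∀ e e', 0 ≤ P e e') ∧ ∀ e, ∑ e', P e e' = 1

/-- A function `f` (viewed as a row vector) is ↑-Möbius monotone if every entry
of the row vector `f C⁻¹` is nonnegative. -/
def UpMobiusMonotoneFun {E : Type*} [Fintype E] [DecidableEq E] [PartialOrder E]
    [DecidableRel ((· ≤ ·) : E → E → Prop)] (f : E → ℝ) : Prop :=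
  ∀ e, 0 ≤ (f ᵥ* (zeta E)⁻¹) e

lemma zeta_det_isUnit (E : Type*) [Fintype E] [DecidableEq E] [PartialOrder E]
    [DecidableRel ((· ≤ ·) : E → E → Prop)] : IsUnit (zeta E).det := by
  suffices h : (zeta E).det = 1 by rw [h]; exact isUnit_one
  letI : Fintype (LinearExtension E) := ‹Fintype E›
  letI : DecidableEq (LinearExtension E) := ‹DecidableEq E›
  let eqv : LinearExtension E ≃ E := Equiv.refl E
  have hbt : ((zeta E).submatrix eqv eqv).BlockTriangular id := by
    intro i j hij
    simp only [Matrix.submatrix_apply, zeta, Matrix.of_apply]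
    rw [if_neg]
    intro hle
    have hmid : toLinearExtension (eqv i) ≤ toLinearExtension (eqv j) :=
      (toLinearExtension (α := E)).monotone hle
    exact hij.not_ge hmid
  have h2 : ((zeta E).submatrix eqv eqv).det = 1 := by
    rw [Matrix.det_of_upperTriangular hbt]
    have : ∀ i : LinearExtension E, ((zeta E).submatrix eqv eqv) i i = 1 := by
      intro i
      simp [zeta, eqv]
    rw [Finset.prod_congr rfl fun i _ => this i]
    simp
  exact (Matrix.det_submatrix_equiv_self eqv (zeta E)).symm.trans h2

/-- Key algebraic identity. -/
lemma key_identity {E : Type*} [Fintype E] [DecidableEq E] [PartialOrder E]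
    [DecidableRel ((· ≤ ·) : E → E → Prop)] (P : Matrix E E ℝ) (f : E → ℝ) :
    (P *ᵥ f) ᵥ* (zeta E)⁻¹
      = (f ᵥ* (zeta E)⁻¹) ᵥ* ((((zeta E)ᵀ)⁻¹ * P * (zeta E)ᵀ))ᵀ := by
  have hC : IsUnit (zeta E).det := zeta_det_isUnit E
  have h1 : ((((zeta E)ᵀ)⁻¹ * P * (zeta E)ᵀ))ᵀ
      = (zeta E) * Pᵀ * (zeta E)⁻¹ := by
    rw [Matrix.transpose_mul, Matrix.transpose_mul, Matrix.transpose_transpose,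
      ← Matrix.transpose_nonsing_inv, Matrix.transpose_transpose, Matrix.mul_assoc]
  rw [h1, Matrix.vecMul_vecMul, ← Matrix.mul_assoc, ← Matrix.mul_assoc,
    Matrix.nonsing_inv_mul _ hC, Matrix.one_mul, ← Matrix.vecMul_vecMul,
    Matrix.vecMul_transpose]

/-- `P` is ↑-Möbius monotone iff `P` maps ↑-Möbius monotone
functions to ↑-Möbius monotone functions. -/
theorem stmt3 {E : Type*} [Fintype E] [DecidableEq E] [PartialOrder E]
    [DecidableRel ((· ≤ ·) : E → E → Prop)]
    (P : Matrix E E ℝ) (hP : IsStochastic P) :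
    (∀ e e', 0 ≤ ((((zeta E)ᵀ)⁻¹ * P * (zeta E)ᵀ)) e e')
    ↔ (∀ f : E → ℝ, UpMobiusMonotoneFun f →
        UpMobiusMonotoneFun (fun e => ∑ e', P e e' * f e')) := by
  have hC : IsUnit (zeta E).det := zeta_det_isUnit E
  have hPf : ∀ f : E → ℝ, (fun e => ∑ e', P e e' * f e') = P *ᵥ f := by
    intro f; rfl
  constructor
  · intro hM f hf
    intro e
    rw [hPf f, key_identity P f]
    have : ((f ᵥ* (zeta E)⁻¹) ᵥ* ((((zeta E)ᵀ)⁻¹ * P * (zeta E)ᵀ))ᵀ) e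
        = ∑ x, (f ᵥ* (zeta E)⁻¹) x * (((zeta E)ᵀ)⁻¹ * P * (zeta E)ᵀ) e x := by
      simp [Matrix.vecMul, dotProduct]
    rw [this]
    exact Finset.sum_nonneg fun e' _ => mul_nonneg (hf e') (hM e e')
  · intro h e e'
    set f : E → ℝ := fun x => zeta E e' x with hf
    have hrow : f ᵥ* (zeta E)⁻¹ = fun j => (1 : Matrix E E ℝ) e' j := by
      have h1 : f ᵥ* (zeta E)⁻¹ = fun j => ((zeta E) * (zeta E)⁻¹) e' j := by
        funext j
        simp [Matrix.vecMul, Matrix.mul_apply, dotProduct, hf]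
      rw [h1, Matrix.mul_nonsing_inv _ hC]
    have hmono : UpMobiusMonotoneFun f := by
      intro j
      rw [hrow]
      by_cases hj : e' = j <;> simp [Matrix.one_apply, hj]
    have h2 := h f hmono e
    rw [hPf f, key_identity P f, hrow] at h2
    have h3 : (((fun j => (1 : Matrix E E ℝ) e' j))
        ᵥ* ((((zeta E)ᵀ)⁻¹ * P * (zeta E)ᵀ))ᵀ) e
        = (((zeta E)ᵀ)⁻¹ * P * (zeta E)ᵀ) e e' := by
      simp [Matrix.vecMul, dotProduct, Matrix.one_apply, ite_mul]
    rwa [h3] at h2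
end

section
/- (Strong stationary duality for ↓-Möbius monotone chains.) Let E be a finite partially ordered set with a unique maximal element, and let P be an irreducible stochastic matrix on E with strictly positive stationary distribution π (πP = π). Let ←P(e,e') = π(e')P(e',e)/π(e) be the time-reversed matrix, H(e) = Σ_{e'≤e} π(e'), and g(e) = ν(e)/π(e) for a given initial probability vector ν. Assume (i) g is ↓-Möbius monotone and (ii) ←P is ↓-Möbius monotone. Define Λ(e_j,e_i) = 1{e_i ≤ e_j}·π(e_i)/H(e_j), ν*(e_i) = H(e_i)·Σ_{e ≥ e_i} μ(e_i,e) g(e), and P*(e_i,e_j) = (H(e_j)/H(e_i))·Σ_{e ≥ e_j} μ(e_j,e)·←P(e,{e_i}↓), where ←P(e,A) = Σ_{e'∈A} ←P(e,e') and {e_i}↓ = {e' : e' ≤ e_i}. Then Λ is a stochastic matrix, ν* is a probability vector with ν = ν*Λ, and P* is a stochastic matrix with ΛP = P*Λ. -/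
open Finset Matrix

section ZetaLemmas

variable {E : Type*} [Fintype E] [DecidableEq E] [PartialOrder E]
  [DecidableRel ((· ≤ ·) : E → E → Prop)]

private noncomputable def rk (e : E) : ℕ := (univ.filter (fun x => x ≤ e)).card

private lemma rk_lt {e e' : E} (h : e < e') : rk e < rk e' := by
  apply Finset.card_lt_card
  refine ⟨fun x hx => ?_, fun hsub => ?_⟩
  · simp only [mem_filter, mem_univ, true_and] at hx ⊢
    exact hx.trans h.le
  · have := hsub (by simp : e' ∈ univ.filter (fun x => x ≤ e'))
    simp only [mem_filter, mem_univ, true_and] at this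
    exact absurd this (not_le_of_gt h)

private lemma rk_pos (e : E) : 1 ≤ rk e := by
  have : e ∈ univ.filter (fun x => x ≤ e) := by simp
  exact Finset.card_pos.mpr ⟨e, this⟩

private lemma rk_le (e : E) : rk e ≤ Fintype.card E := by
  exact le_trans (Finset.card_filter_le _ _) (le_of_eq Finset.card_univ)

private lemma S_supp {e e' : E} (h : ¬ e < e') : (zeta E - 1) e e' = 0 := by
  by_cases he : e = e'
  · subst he
    simp [zeta, Matrix.sub_apply, Matrix.one_apply]
  · have : ¬ e ≤ e' := fun hle => h (lt_of_le_of_ne hle he)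
    simp [zeta, Matrix.sub_apply, Matrix.one_apply, this, he]

private lemma S_pow_supp : ∀ (k : ℕ) (e e' : E),
    ¬ (rk e + k ≤ rk e') → ((zeta E - 1) ^ k) e e' = 0 := by
  intro k
  induction k with
  | zero =>
    intro e e' h
    rw [pow_zero]
    have : e ≠ e' := by rintro rfl; simp at h
    simp [Matrix.one_apply, this]
  | succ k ih =>
    intro e e' h
    rw [pow_succ', Matrix.mul_apply]
    apply Finset.sum_eq_zero
    intro x _
    by_cases hx : e < x
    · by_cases hx2 : rk x + k ≤ rk e'
      · exact absurd (le_trans (by have := rk_lt hx; omega) hx2) h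
      · rw [ih x e' hx2, mul_zero]
    · rw [S_supp hx, zero_mul]

private lemma S_pow_card : (zeta E - 1) ^ (Fintype.card E) = 0 := by
  ext e e'
  rw [S_pow_supp (Fintype.card E) e e' (by have := rk_pos e; have := rk_le e'; omega)]
  simp

noncomputable def zetaInvB (E : Type*) [Fintype E] [DecidableEq E] [PartialOrder E]
    [DecidableRel ((· ≤ ·) : E → E → Prop)] : Matrix E E ℝ :=
  ∑ i ∈ range (Fintype.card E), (-(zeta E - 1)) ^ i

lemma zetaInvB_mul_zeta : zetaInvB E * zeta E = 1 := by
  have h := geom_sum_mul (-(zeta E - 1)) (Fintype.card E)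
  have hpow : (-(zeta E - 1)) ^ (Fintype.card E) = 0 := by
    rw [neg_pow, S_pow_card, mul_zero]
  rw [hpow] at h
  have h2 : -(zeta E - 1) - 1 = -(zeta E) := by abel
  rw [h2] at h
  have : zetaInvB E * -(zeta E) = -1 := by simpa [zetaInvB] using h
  have := congrArg Neg.neg this
  simpa [mul_neg] using this

lemma zeta_inv_eq : (zeta E)⁻¹ = zetaInvB E :=
  Matrix.inv_eq_left_inv zetaInvB_mul_zeta

lemma zeta_inv_mul : (zeta E)⁻¹ * zeta E = 1 := by
  rw [zeta_inv_eq]; exact zetaInvB_mul_zeta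

lemma zeta_mul_inv : zeta E * (zeta E)⁻¹ = 1 :=
  mul_eq_one_comm.mp zeta_inv_mul

private def Supp (A : Matrix E E ℝ) : Prop := ∀ e e' : E, ¬ e ≤ e' → A e e' = 0

private lemma supp_mul {A B : Matrix E E ℝ} (hA : Supp A) (hB : Supp B) :
    Supp (A * B) := by
  intro e e' h
  rw [Matrix.mul_apply]
  apply Finset.sum_eq_zero
  intro x _
  by_cases hx : e ≤ x
  · have : ¬ x ≤ e' := fun h2 => h (hx.trans h2)
    rw [hB x e' this, mul_zero]
  · rw [hA e x hx, zero_mul]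

private lemma supp_negS : Supp (-(zeta E - 1) : Matrix E E ℝ) := by
  intro e e' h
  have : ¬ e < e' := fun h2 => h h2.le
  simp [S_supp this]

private lemma supp_one : Supp (1 : Matrix E E ℝ) := by
  intro e e' h
  have : e ≠ e' := by rintro rfl; exact h le_rfl
  simp [Matrix.one_apply, this]

lemma zeta_inv_supp {e e' : E} (h : ¬ e ≤ e') : (zeta E)⁻¹ e e' = 0 := by
  rw [zeta_inv_eq]
  have hpow : ∀ i : ℕ, Supp ((-(zeta E - 1) : Matrix E E ℝ) ^ i) := by
    intro i
    induction i with
    | zero => simpa [pow_zero] using supp_one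
    | succ i ih => rw [pow_succ]; exact supp_mul ih supp_negS
  have : ∀ i ∈ range (Fintype.card E), ((-(zeta E - 1) : Matrix E E ℝ) ^ i) e e' = 0 :=
    fun i _ => hpow i e e' h
  simp only [zetaInvB, Matrix.sum_apply]
  exact Finset.sum_eq_zero this

end ZetaLemmas


/-- `π` is a probability vector. -/
def IsProbVec {E : Type*} [Fintype E] (π : E → ℝ) : Prop :=
  (∀ e, 0 ≤ π e) ∧ ∑ e, π e = 1

/-- strong stationary duality for ↓-Möbius monotone chains.  With
`μ = (zeta E)⁻¹`, `H(e) = Σ_{e' ≤ e} π(e')`, `g = ν/π`, time reversal `←P`,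
link `Λ(e_j,e_i) = 1{e_i ≤ e_j} π(e_i)/H(e_j)`,
`ν*(e_i) = H(e_i) Σ_{e ≥ e_i} μ(e_i,e) g(e)` and
`P*(e_i,e_j) = (H(e_j)/H(e_i)) Σ_{e ≥ e_j} μ(e_j,e) ←P(e,{e_i}↓)`:
if `g` is ↓-Möbius monotone and `←P` is ↓-Möbius monotone, then `Λ` is
stochastic, `ν*` is a probability vector with `ν = ν*Λ`, and `P*` is stochastic
with `ΛP = P*Λ`. -/
theorem stmt8 {E : Type*} [Fintype E] [DecidableEq E] [PartialOrder E]
    [DecidableRel ((· ≤ ·) : E → E → Prop)]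
    (eM : E) (hmax : ∀ e, e ≤ eM)
    (P : Matrix E E ℝ) (hP : IsStochastic P)
    (hirr : ∀ e e' : E, ∃ n : ℕ, 0 < (P ^ n) e e')
    (π : E → ℝ) (hπ : IsProbVec π) (hπpos : ∀ e, 0 < π e)
    (hstat : ∀ e', ∑ e, π e * P e e' = π e')
    (ν : E → ℝ) (hν : IsProbVec ν)
    (Prev : Matrix E E ℝ) (hPrev : ∀ e e', Prev e e' = π e' * P e' e / π e)
    (g : E → ℝ) (hg : ∀ e, g e = ν e / π e)
    (H : E → ℝ) (hH : ∀ e, H e = ∑ e' ∈ univ.filter (fun e' => e' ≤ e), π e')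
    (hgmon : ∀ e, 0 ≤ (g ᵥ* ((zeta E)ᵀ)⁻¹) e)
    (hPrevmon : ∀ e e', 0 ≤ ((zeta E)⁻¹ * Prev * zeta E) e e')
    (Λ : Matrix E E ℝ)
    (hΛ : ∀ ej ei, Λ ej ei = if ei ≤ ej then π ei / H ej else 0)
    (νd : E → ℝ)
    (hνd : ∀ ei, νd ei =
      H ei * ∑ e ∈ univ.filter (fun e => ei ≤ e), (zeta E)⁻¹ ei e * g e)
    (Pd : Matrix E E ℝ)
    (hPd : ∀ ei ej, Pd ei ej = (H ej / H ei) *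
      ∑ e ∈ univ.filter (fun e => ej ≤ e), (zeta E)⁻¹ ej e *
        (∑ e' ∈ univ.filter (fun e' => e' ≤ ei), Prev e e')) :
    IsStochastic Λ ∧ IsProbVec νd ∧ (∀ e, ν e = ∑ e', νd e' * Λ e' e) ∧
    IsStochastic Pd ∧ Λ * P = Pd * Λ := by
  have hCM : zeta E * (zeta E)⁻¹ = 1 := zeta_mul_inv
  have hHpos : ∀ e, 0 < H e := by
    intro e
    rw [hH]
    exact Finset.sum_pos (fun i _ => hπpos i) ⟨e, by simp⟩
  have hHne : ∀ e, H e ≠ 0 := fun e => (hHpos e).ne'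
  -- Λ is stochastic
  have hΛrow : ∀ ej, ∑ ei, Λ ej ei = 1 := by
    intro ej
    calc ∑ ei, Λ ej ei
        = ∑ ei ∈ univ.filter (fun ei => ei ≤ ej), π ei / H ej := by
          rw [Finset.sum_filter]
          exact Finset.sum_congr rfl (fun ei _ => hΛ ej ei)
      _ = (∑ ei ∈ univ.filter (fun ei => ei ≤ ej), π ei) / H ej := by
          rw [Finset.sum_div]
      _ = 1 := by rw [← hH, div_self (hHne ej)]
  have hΛstoch : IsStochastic Λ := by
    refine ⟨fun ej ei => ?_, hΛrow⟩
    rw [hΛ]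
    split
    · exact div_nonneg (hπ.1 ei) (hHpos ej).le
    · exact le_rfl
  -- H as a sum against zeta
  have hHC : ∀ e, H e = ∑ e', π e' * zeta E e' e := by
    intro e
    rw [hH, Finset.sum_filter]
    refine Finset.sum_congr rfl fun e' _ => ?_
    by_cases h : e' ≤ e <;> simp [zeta, h]
  -- π is stationary for Prev
  have hπPrev : ∀ e', ∑ e, π e * Prev e e' = π e' := by
    intro e'
    have step : ∀ e, π e * Prev e e' = π e' * P e' e := by
      intro e
      rw [hPrev, mul_comm, div_mul_cancel₀ _ (hπpos e).ne']
    rw [Finset.sum_congr rfl (fun e _ => step e), ← Finset.mul_sum, hP.2 e', mul_one]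
  -- full-sum versions of the filtered sums
  have hfullν : ∀ ei, (∑ e ∈ univ.filter (fun e => ei ≤ e), (zeta E)⁻¹ ei e * g e)
      = ∑ e, (zeta E)⁻¹ ei e * g e := by
    intro ei
    refine Finset.sum_filter_of_ne fun e _ hne => ?_
    by_contra h
    exact hne (by rw [zeta_inv_supp h, zero_mul])
  have hνd' : ∀ ei, νd ei = H ei * ∑ e, (zeta E)⁻¹ ei e * g e := by
    intro ei; rw [hνd, hfullν]
  -- Möbius monotonicity of g, rewritten
  have hgM : ∀ ei, 0 ≤ ∑ e, (zeta E)⁻¹ ei e * g e := by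
    intro ei
    have h := hgmon ei
    have h2 : (g ᵥ* ((zeta E)ᵀ)⁻¹) ei = ∑ e, (zeta E)⁻¹ ei e * g e := by
      rw [← Matrix.transpose_nonsing_inv]
      simp [Matrix.vecMul, dotProduct, Matrix.transpose_apply, mul_comm]
    rwa [h2] at h
  -- ν = νd Λ
  have hνΛ : ∀ e, ∑ e', νd e' * Λ e' e = ν e := by
    intro e
    have step : ∀ e', νd e' * Λ e' e
        = π e * (zeta E e e' * ∑ x, (zeta E)⁻¹ e' x * g x) := by
      intro e'
      rw [hνd', hΛ]
      by_cases h : e ≤ e'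
      · simp only [if_pos h]
        have hz : zeta E e e' = 1 := by simp [zeta, h]
        rw [hz]
        have hne := hHne e'
        generalize (∑ x, (zeta E)⁻¹ e' x * g x) = S
        field_simp
      · have hz : zeta E e e' = 0 := by simp [zeta, h]
        rw [if_neg h, hz]
        ring
    rw [Finset.sum_congr rfl (fun e' _ => step e'), ← Finset.mul_sum]
    have key : ∑ e', zeta E e e' * ∑ x, (zeta E)⁻¹ e' x * g x = g e := by
      calc ∑ e', zeta E e e' * ∑ x, (zeta E)⁻¹ e' x * g x
          = ∑ e', ∑ x, zeta E e e' * (zeta E)⁻¹ e' x * g x := by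
            refine Finset.sum_congr rfl fun e' _ => ?_
            rw [Finset.mul_sum]
            exact Finset.sum_congr rfl fun x _ => by ring
        _ = ∑ x, (∑ e', zeta E e e' * (zeta E)⁻¹ e' x) * g x := by
            rw [Finset.sum_comm]
            exact Finset.sum_congr rfl fun x _ => by rw [Finset.sum_mul]
        _ = ∑ x, (1 : Matrix E E ℝ) e x * g x := by
            refine Finset.sum_congr rfl fun x _ => ?_
            rw [← Matrix.mul_apply, hCM]
        _ = g e := by simp [Matrix.one_apply]
    rw [key, hg, mul_comm, div_mul_cancel₀ _ (hπpos e).ne']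
  -- νd is a probability vector
  have hνdprob : IsProbVec νd := by
    constructor
    · intro ei
      rw [hνd']
      exact mul_nonneg (hHpos ei).le (hgM ei)
    · calc ∑ ei, νd ei = ∑ ei, νd ei * ∑ e, Λ ei e := by
            refine Finset.sum_congr rfl fun ei _ => ?_
            rw [hΛrow ei, mul_one]
        _ = ∑ ei, ∑ e, νd ei * Λ ei e := by
            exact Finset.sum_congr rfl fun ei _ => Finset.mul_sum _ _ _
        _ = ∑ e, ∑ ei, νd ei * Λ ei e := Finset.sum_comm
        _ = ∑ e, ν e := Finset.sum_congr rfl fun e _ => hνΛ e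
        _ = 1 := hν.2
  -- Pd in terms of the conjugated matrix X
  have hXkey : zeta E * ((zeta E)⁻¹ * Prev * zeta E) = Prev * zeta E := by
    calc zeta E * ((zeta E)⁻¹ * Prev * zeta E)
        = (zeta E * (zeta E)⁻¹) * Prev * zeta E := by
          simp only [Matrix.mul_assoc]
      _ = Prev * zeta E := by rw [hCM, Matrix.one_mul]
  have hPC : ∀ e ei, (∑ e' ∈ univ.filter (fun e' => e' ≤ ei), Prev e e')
      = (Prev * zeta E) e ei := by
    intro e ei
    rw [Matrix.mul_apply, Finset.sum_filter]
    refine Finset.sum_congr rfl fun e' _ => ?_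
    by_cases h : e' ≤ ei <;> simp [zeta, h]
  have hPd' : ∀ ei ej, Pd ei ej
      = (H ej / H ei) * ((zeta E)⁻¹ * Prev * zeta E) ej ei := by
    intro ei ej
    rw [hPd]
    congr 1
    calc ∑ e ∈ univ.filter (fun e => ej ≤ e), (zeta E)⁻¹ ej e *
          (∑ e' ∈ univ.filter (fun e' => e' ≤ ei), Prev e e')
        = ∑ e ∈ univ.filter (fun e => ej ≤ e), (zeta E)⁻¹ ej e * (Prev * zeta E) e ei := by
          exact Finset.sum_congr rfl fun e _ => by rw [hPC]
      _ = ∑ e, (zeta E)⁻¹ ej e * (Prev * zeta E) e ei := by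
          refine Finset.sum_filter_of_ne fun e _ hne => ?_
          by_contra h
          exact hne (by rw [zeta_inv_supp h, zero_mul])
      _ = ((zeta E)⁻¹ * (Prev * zeta E)) ej ei := (Matrix.mul_apply).symm
      _ = ((zeta E)⁻¹ * Prev * zeta E) ej ei := by rw [Matrix.mul_assoc]
  -- row sums of H against X
  have hrowsum : ∀ ei, ∑ ej, H ej * ((zeta E)⁻¹ * Prev * zeta E) ej ei = H ei := by
    intro ei
    calc ∑ ej, H ej * ((zeta E)⁻¹ * Prev * zeta E) ej ei
        = ∑ ej, ∑ e', π e' * (zeta E e' ej * ((zeta E)⁻¹ * Prev * zeta E) ej ei) := by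
          refine Finset.sum_congr rfl fun ej _ => ?_
          rw [hHC, Finset.sum_mul]
          exact Finset.sum_congr rfl fun e' _ => by ring
      _ = ∑ e', π e' * ∑ ej, zeta E e' ej * ((zeta E)⁻¹ * Prev * zeta E) ej ei := by
          rw [Finset.sum_comm]
          exact Finset.sum_congr rfl fun e' _ => (Finset.mul_sum _ _ _).symm
      _ = ∑ e', π e' * (zeta E * ((zeta E)⁻¹ * Prev * zeta E)) e' ei := by
          exact Finset.sum_congr rfl fun e' _ => by rw [Matrix.mul_apply]
      _ = ∑ e', π e' * (Prev * zeta E) e' ei := by rw [hXkey]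
      _ = ∑ e', ∑ e, π e' * Prev e' e * zeta E e ei := by
          refine Finset.sum_congr rfl fun e' _ => ?_
          rw [Matrix.mul_apply, Finset.mul_sum]
          exact Finset.sum_congr rfl fun e _ => by ring
      _ = ∑ e, (∑ e', π e' * Prev e' e) * zeta E e ei := by
          rw [Finset.sum_comm]
          exact Finset.sum_congr rfl fun e _ => (Finset.sum_mul _ _ _).symm
      _ = ∑ e, π e * zeta E e ei := by
          exact Finset.sum_congr rfl fun e _ => by rw [hπPrev]
      _ = H ei := (hHC ei).symm
  -- Pd is stochastic
  have hPdstoch : IsStochastic Pd := by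
    constructor
    · intro ei ej
      rw [hPd']
      exact mul_nonneg (div_nonneg (hHpos ej).le (hHpos ei).le) (hPrevmon ej ei)
    · intro ei
      calc ∑ ej, Pd ei ej
          = ∑ ej, H ej * ((zeta E)⁻¹ * Prev * zeta E) ej ei / H ei := by
            refine Finset.sum_congr rfl fun ej _ => ?_
            rw [hPd', div_mul_eq_mul_div]
        _ = (∑ ej, H ej * ((zeta E)⁻¹ * Prev * zeta E) ej ei) / H ei := by
            rw [Finset.sum_div]
        _ = 1 := by rw [hrowsum, div_self (hHne ei)]
  -- intertwining Λ P = Pd Λ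
  have hint : Λ * P = Pd * Λ := by
    ext ej e'
    rw [Matrix.mul_apply, Matrix.mul_apply]
    have hL : ∑ ei, Λ ej ei * P ei e' = (∑ e, π e * P e e' * zeta E e ej) / H ej := by
      rw [Finset.sum_div]
      refine Finset.sum_congr rfl fun ei _ => ?_
      rw [hΛ]
      by_cases h : ei ≤ ej
      · have hz : zeta E ei ej = 1 := by simp [zeta, h]
        rw [if_pos h, hz]
        ring
      · have hz : zeta E ei ej = 0 := by simp [zeta, h]
        rw [if_neg h, hz]
        ring
    have hR : ∑ ek, Pd ej ek * Λ ek e'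
        = (π e' * ∑ ek, zeta E e' ek * ((zeta E)⁻¹ * Prev * zeta E) ek ej) / H ej := by
      rw [Finset.mul_sum, Finset.sum_div]
      refine Finset.sum_congr rfl fun ek _ => ?_
      rw [hPd', hΛ]
      by_cases h : e' ≤ ek
      · have hz : zeta E e' ek = 1 := by simp [zeta, h]
        rw [if_pos h, hz]
        have hne1 := hHne ek
        have hne2 := hHne ej
        generalize ((zeta E)⁻¹ * Prev * zeta E) ek ej = x
        field_simp
      · have hz : zeta E e' ek = 0 := by simp [zeta, h]
        rw [if_neg h, hz]
        ring
    rw [hL, hR]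
    congr 1
    have hmid : ∑ ek, zeta E e' ek * ((zeta E)⁻¹ * Prev * zeta E) ek ej
        = (Prev * zeta E) e' ej := by
      rw [← Matrix.mul_apply, hXkey]
    rw [hmid, Matrix.mul_apply, Finset.mul_sum]
    refine Finset.sum_congr rfl fun e _ => ?_
    rw [hPrev]
    have hne := (hπpos e').ne'
    field_simp
  exact ⟨hΛstoch, hνdprob, fun e => (hνΛ e).symm, hPdstoch, hint⟩
end

section
/- Under the hypotheses of the strong stationary duality theorem for ↓-Möbius monotone chains (E a finite partially ordered set with unique maximal element e_M, P irreducible stochastic with strictly positive stationary distribution π, g = ν/π ↓-Möbius monotone, and the time reversal ←P ↓-Möbius monotone), the dual matrix P* defined by P*(e_i,e_j) = (H(e_j)/H(e_i))·Σ_{e ≥ e_j} μ(e_j,e)·←P(e,{e_i}↓) satisfies P*(e_M,e_M) = 1 (i.e., e_M is an absorbing state for P*), and the row Λ(e_M,·) of the link Λ(e_j,e_i) = 1{e_i ≤ e_j}·π(e_i)/H(e_j) equals π. -/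
open Finset Matrix

lemma zeta_det (E : Type*) [Fintype E] [DecidableEq E] [PartialOrder E]
    [DecidableRel ((· ≤ ·) : E → E → Prop)] : (zeta E).det = 1 := by
  classical
  letI : Fintype (LinearExtension E) := ‹Fintype E›
  have hcard : Fintype.card (LinearExtension E) = Fintype.card E := rfl
  let f : Fin (Fintype.card E) ≃o LinearExtension E := monoEquivOfFin _ hcard
  let g : Fin (Fintype.card E) ≃ E := f.toEquiv
  have hdet : (zeta E).det = ((zeta E).submatrix g g).det :=
    (Matrix.det_submatrix_equiv_self g (zeta E)).symm
  rw [hdet, Matrix.det_of_upperTriangular]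
  · apply Finset.prod_eq_one
    intro i _
    simp [zeta, g, Matrix.submatrix]
  · intro i j hij
    simp only [Matrix.submatrix_apply, zeta, Matrix.of_apply]
    rw [if_neg]
    intro hle
    have h1 : (toLinearExtension (g i) : LinearExtension E) ≤ toLinearExtension (g j) :=
      toLinearExtension.monotone hle
    have h2 : f.symm (toLinearExtension (g i)) ≤ f.symm (toLinearExtension (g j)) :=
      f.symm.monotone h1
    have h3 : i ≤ j := by
      have e1 : f.symm (toLinearExtension (g i)) = i := f.symm_apply_apply i
      have e2 : f.symm (toLinearExtension (g j)) = j := f.symm_apply_apply j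
      rwa [e1, e2] at h2
    exact absurd h3 (not_le.mpr hij)

lemma zeta_inv_max (E : Type*) [Fintype E] [DecidableEq E] [PartialOrder E]
    [DecidableRel ((· ≤ ·) : E → E → Prop)] (eM : E) (hmax : ∀ e, e ≤ eM) :
    (zeta E)⁻¹ eM eM = 1 := by
  classical
  have hrow : (Pi.single eM (1:ℝ) : E → ℝ) = zeta E eM := by
    funext e'
    simp only [zeta, Matrix.of_apply]
    by_cases h : e' = eM
    · subst h; simp
    · rw [Pi.single_apply, if_neg h, if_neg (fun hle => h (le_antisymm (hmax e') hle))]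
  have hadj : (zeta E).adjugate eM eM = 1 := by
    rw [Matrix.adjugate_apply, hrow, Matrix.updateRow_eq_self, zeta_det]
  rw [Matrix.inv_def, zeta_det, Ring.inverse_one]
  simp [hadj]

/-- under the hypotheses of the strong stationary duality theorem
for ↓-Möbius monotone chains, the unique maximal state `e_M` is absorbing for
the dual matrix `P*` (i.e. `P*(e_M,e_M) = 1`) and the row `Λ(e_M,·)` of the
link equals `π`. -/
theorem stmt10 {E : Type*} [Fintype E] [DecidableEq E] [PartialOrder E]
    [DecidableRel ((· ≤ ·) : E → E → Prop)]
    (eM : E) (hmax : ∀ e, e ≤ eM)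
    (P : Matrix E E ℝ) (hP : IsStochastic P)
    (hirr : ∀ e e' : E, ∃ n : ℕ, 0 < (P ^ n) e e')
    (π : E → ℝ) (hπ : IsProbVec π) (hπpos : ∀ e, 0 < π e)
    (hstat : ∀ e', ∑ e, π e * P e e' = π e')
    (ν : E → ℝ) (hν : IsProbVec ν)
    (Prev : Matrix E E ℝ) (hPrev : ∀ e e', Prev e e' = π e' * P e' e / π e)
    (g : E → ℝ) (hg : ∀ e, g e = ν e / π e)
    (H : E → ℝ) (hH : ∀ e, H e = ∑ e' ∈ univ.filter (fun e' => e' ≤ e), π e')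
    (hgmon : ∀ e, 0 ≤ (g ᵥ* ((zeta E)ᵀ)⁻¹) e)
    (hPrevmon : ∀ e e', 0 ≤ ((zeta E)⁻¹ * Prev * zeta E) e e')
    (Λ : Matrix E E ℝ)
    (hΛ : ∀ ej ei, Λ ej ei = if ei ≤ ej then π ei / H ej else 0)
    (Pd : Matrix E E ℝ)
    (hPd : ∀ ei ej, Pd ei ej = (H ej / H ei) *
      ∑ e ∈ univ.filter (fun e => ej ≤ e), (zeta E)⁻¹ ej e *
        (∑ e' ∈ univ.filter (fun e' => e' ≤ ei), Prev e e')) :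
    Pd eM eM = 1 ∧ ∀ e, Λ eM e = π e := by
  have hfilt2 : univ.filter (fun e' => e' ≤ eM) = (univ : Finset E) :=
    filter_true_of_mem fun e _ => hmax e
  have hHeM : H eM = 1 := by
    rw [hH, hfilt2]; exact hπ.2
  constructor
  · rw [hPd]
    have hfilt : univ.filter (fun e => eM ≤ e) = ({eM} : Finset E) := by
      ext e
      simp only [mem_filter, mem_univ, true_and, mem_singleton]
      exact ⟨fun h => le_antisymm (hmax e) h, fun h => h ▸ le_refl eM⟩
    rw [hfilt, hfilt2, Finset.sum_singleton, zeta_inv_max E eM hmax, hHeM]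
    have hsum : ∑ e', Prev eM e' = 1 := by
      simp only [hPrev]
      rw [← Finset.sum_div, hstat eM, div_self (hπpos eM).ne']
    rw [hsum]; ring
  · intro e
    rw [hΛ, if_pos (hmax e), hHeM, div_one]
end

section
/- For the random walk on the d-dimensional cube E = {0,1}^d with parameters α_i, β_i > 0 (transitions P(e, e+s_i) = α_i when e_i = 0, P(e, e−s_i) = β_i when e_i = 1, P(e,e) = 1 − Σ_{i: e_i=0} α_i − Σ_{i: e_i=1} β_i, all other entries 0), assume Σ_{i=1}^d α_i + Σ_{i=1}^d β_i ≤ 1. Let π be its stationary distribution π(e) = Π_{i: e_i=1} α_i/(α_i+β_i) · Π_{i: e_i=0} β_i/(α_i+β_i), H(e) = Σ_{e'≤e} π(e'), and define the dual matrix P*(e,e') = (H(e')/H(e))·Σ_{e''≥e'} μ(e',e'')·P(e'',{e}↓) (the chain being reversible, its time reversal equals P). Then: P*(e, e+s_i) = α_i + β_i for every i with e_i = 0; P*(e,e) = 1 − Σ_{i: e_i=0}(α_i + β_i); and P*(e,e') = 0 for every other e' ≠ e (in particular P*(e, e−s_i) = 0 for every i with e_i = 1). Consequently P* is an upper-triangular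 stochastic matrix which moves only upwards to nearest neighbors. -/
open Finset Matrix

instance {d : ℕ} :
    DecidableRel ((· ≤ ·) : (Fin d → Bool) → (Fin d → Bool) → Prop) :=
  fun e e' => decidable_of_iff (∀ i, e i ≤ e' i) Pi.le_def.symm

/-- Transition matrix of the random walk on the `d`-dimensional cube
`{0,1}^d`: from `e`, coordinate `i` flips `0 → 1` with probability `α i`,
flips `1 → 0` with probability `β i`, and the walk stays at `e` with the
remaining probability; all other transitions have probability `0`. -/
noncomputable def cubeP {d : ℕ} (α β : Fin d → ℝ) :
    Matrix (Fin d → Bool) (Fin d → Bool) ℝ :=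
  Matrix.of fun e e' =>
    (if e' = e then
        1 - (∑ i ∈ univ.filter (fun i => e i = false), α i)
          - (∑ i ∈ univ.filter (fun i => e i = true), β i)
      else 0)
    + ∑ i, ((if e i = false ∧ e' = Function.update e i true then α i else 0)
          + (if e i = true ∧ e' = Function.update e i false then β i else 0))

/-- The stationary distribution of the cube walk:
`π(e) = Π_{i : e_i = 1} α_i/(α_i+β_i) · Π_{i : e_i = 0} β_i/(α_i+β_i)`. -/
noncomputable def cubePi {d : ℕ} (α β : Fin d → ℝ) : (Fin d → Bool) → ℝ :=
  fun e => ∏ i, (if e i then α i / (α i + β i) else β i / (α i + β i))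

noncomputable def Mu (d : ℕ) : Matrix (Fin d → Bool) (Fin d → Bool) ℝ :=
  Matrix.of fun e e' =>
    if e ≤ e' then (-1 : ℝ) ^ (univ.filter (fun i => e i ≠ e' i)).card else 0

lemma zeta_mul_Mu (d : ℕ) : zeta (Fin d → Bool) * Mu d = 1 := by
  ext e e''
  rw [Matrix.mul_apply]
  have h1 : ∀ e' : Fin d → Bool,
      zeta (Fin d → Bool) e e' * Mu d e' e''
      = if e ≤ e' ∧ e' ≤ e'' then
          (-1 : ℝ) ^ (univ.filter (fun i => e' i ≠ e'' i)).card else 0 := by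
    intro e'
    simp only [zeta, Mu, Matrix.of_apply]
    split_ifs with h1 h2 h3 h4 h5 <;> simp_all
  simp only [h1, ← Finset.sum_filter]
  by_cases h : e ≤ e''
  · have key : ∑ e' ∈ univ.filter (fun e' => e ≤ e' ∧ e' ≤ e''),
        (-1 : ℝ) ^ (univ.filter (fun i => e' i ≠ e'' i)).card
        = ∑ S ∈ (univ.filter (fun i => e i ≠ e'' i)).powerset, (-1 : ℝ) ^ S.card := by
      refine Finset.sum_nbij' (fun e' => univ.filter (fun i => e' i ≠ e'' i))
        (fun S => fun i => if i ∈ S then e i else e'' i) ?_ ?_ ?_ ?_ ?_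
      · intro a ha
        simp only [mem_filter, mem_univ, true_and] at ha ⊢
        rw [Finset.mem_powerset]
        intro i hi
        simp only [mem_filter, mem_univ, true_and] at hi ⊢
        intro hcon
        apply hi
        have h1 := ha.1 i
        have h2 := ha.2 i
        revert h1 h2 hcon
        cases e i <;> cases a i <;> cases e'' i <;> simp
      · intro S hS
        simp only [Finset.mem_powerset] at hS
        simp only [mem_filter, mem_univ, true_and]
        constructor
        · intro i
          by_cases hi : i ∈ S
          · simp [hi]
          · simp only [hi, if_neg, if_false]
            exact h i
        · intro i
          by_cases hi : i ∈ S
          · simp only [hi, if_pos]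
            exact h i
          · simp [hi]
      · intro a ha
        simp only [mem_filter, mem_univ, true_and] at ha
        funext i
        by_cases hi : a i = e'' i
        · simp [hi]
        · simp only [mem_filter, mem_univ, true_and, hi, not_false_iff, if_pos]
          -- e i = a i here
          have h1 := ha.1 i
          have h2 := ha.2 i
          -- a i ≠ e'' i, a i ≤ e'' i so a i = false, e'' i = true; e i ≤ a i so e i = false
          revert h1 h2 hi
          cases e i <;> cases a i <;> cases e'' i <;> simp
      · intro S hS
        simp only [Finset.mem_powerset] at hS
        ext i
        simp only [mem_filter, mem_univ, true_and]
        by_cases hi : i ∈ S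
        · simp only [hi, if_pos, iff_true]
          have := hS hi
          simp only [mem_filter, mem_univ, true_and] at this
          exact this
        · simp [hi]
      · intro a ha; rfl
    rw [key]
    have := Finset.sum_powerset_neg_one_pow_card
      (x := univ.filter (fun i => e i ≠ e'' i))
    have cast : ∑ S ∈ (univ.filter (fun i => e i ≠ e'' i)).powerset, (-1 : ℝ) ^ S.card
        = ((∑ S ∈ (univ.filter (fun i => e i ≠ e'' i)).powerset, (-1 : ℤ) ^ S.card : ℤ) : ℝ) := by
      push_cast; rfl
    rw [cast, this]
    have hiff : (univ.filter (fun i => e i ≠ e'' i) = ∅) ↔ e = e'' := by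
      rw [Finset.filter_eq_empty_iff]
      constructor
      · intro hh; funext i; have := hh (mem_univ i); simpa using this
      · intro hh i _; simp [hh]
    rw [Matrix.one_apply]
    split_ifs with h1 h2 h3 <;> simp_all [hiff]
  · have : univ.filter (fun e' : Fin d → Bool => e ≤ e' ∧ e' ≤ e'') = ∅ := by
      rw [Finset.filter_eq_empty_iff]
      rintro e' _ ⟨h1, h2⟩
      exact h (le_trans h1 h2)
    rw [this]
    have : e ≠ e'' := fun hc => h (hc ▸ le_refl _)
    simp [Matrix.one_apply, this]

lemma zeta_inv_eq_s15 (d : ℕ) : (zeta (Fin d → Bool))⁻¹ = Mu d :=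
  Matrix.inv_eq_right_inv (zeta_mul_Mu d)

lemma Mu_mul_zeta (d : ℕ) : Mu d * zeta (Fin d → Bool) = 1 :=
  mul_eq_one_comm.mp (zeta_mul_Mu d)

noncomputable def Gm {d : ℕ} (α β : Fin d → ℝ) (e : Fin d → Bool) :
    (Fin d → Bool) → ℝ := fun e'' =>
  (if e'' = e then 1 - ∑ i ∈ univ.filter (fun i => e i = false), (α i + β i) else 0)
    + ∑ i, (if e i = false ∧ e'' = Function.update e i true then β i else 0)

lemma sum_ite_and_eq {γ : Type*} [Fintype γ] [DecidableEq γ]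
    (P : γ → Prop) [DecidablePred P] (R : Prop) [Decidable R] (c : γ) (v : ℝ) :
    (∑ a, if P a ∧ R ∧ a = c then v else 0) = if P c ∧ R then v else 0 := by
  rw [Finset.sum_eq_single c]
  · simp [and_assoc]
  · intro b _ hb; simp [hb]
  · simp

lemma sum_ite_and_eq' {γ : Type*} [Fintype γ] [DecidableEq γ]
    (P : γ → Prop) [DecidablePred P] (c : γ) (v : ℝ) :
    (∑ a, if P a ∧ a = c then v else 0) = if P c then v else 0 := by
  rw [Finset.sum_eq_single c]
  · simp
  · intro b _ hb; simp [hb]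
  · simp

lemma le_update_true {d : ℕ} (x : Fin d → Bool) (i : Fin d) :
    x ≤ Function.update x i true := by
  intro j
  rcases eq_or_ne j i with rfl | hj
  · simp [Function.update_self, Bool.le_true]
  · simp [Function.update_of_ne hj]

lemma FG {d : ℕ} (α β : Fin d → ℝ) (e x : Fin d → Bool) :
    (∑ e''' ∈ univ.filter (fun e''' => e''' ≤ e), cubeP α β x e''')
      = ∑ y, zeta (Fin d → Bool) x y * Gm α β e y := by
  have hL : (∑ e''' ∈ univ.filter (fun e''' => e''' ≤ e), cubeP α β x e''')
      = (if x ≤ e then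
          1 - (∑ i ∈ univ.filter (fun i => x i = false), α i)
            - (∑ i ∈ univ.filter (fun i => x i = true), β i) else 0)
        + ∑ i, ((if Function.update x i true ≤ e ∧ x i = false then α i else 0)
              + (if Function.update x i false ≤ e ∧ x i = true then β i else 0)) := by
    rw [Finset.sum_filter]
    have point : ∀ a : Fin d → Bool,
        (if a ≤ e then cubeP α β x a else 0)
        = (if a ≤ e ∧ a = x then
              1 - (∑ i ∈ univ.filter (fun i => x i = false), α i)
                - (∑ i ∈ univ.filter (fun i => x i = true), β i) else 0)
          + ∑ i, ((if (a ≤ e) ∧ x i = false ∧ a = Function.update x i true then α i else 0)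
                + (if (a ≤ e) ∧ x i = true ∧ a = Function.update x i false then β i else 0)) := by
      intro a
      by_cases ha : a ≤ e
      · simp only [ha, if_true, true_and, cubeP, Matrix.of_apply]
      · simp [ha]
    rw [Finset.sum_congr rfl (fun a _ => point a), Finset.sum_add_distrib]
    congr 1
    · rw [sum_ite_and_eq' (fun a => a ≤ e) x]
    · rw [Finset.sum_comm]
      refine Finset.sum_congr rfl fun i _ => ?_
      rw [Finset.sum_add_distrib,
        sum_ite_and_eq (fun a => a ≤ e) (x i = false) (Function.update x i true),
        sum_ite_and_eq (fun a => a ≤ e) (x i = true) (Function.update x i false)]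
  have hR : (∑ y, zeta (Fin d → Bool) x y * Gm α β e y)
      = (if x ≤ e then
          1 - ∑ i ∈ univ.filter (fun i => e i = false), (α i + β i) else 0)
        + ∑ i, (if x ≤ Function.update e i true ∧ e i = false then β i else 0) := by
    have point : ∀ y : Fin d → Bool,
        zeta (Fin d → Bool) x y * Gm α β e y
        = (if (x ≤ y) ∧ y = e then
            1 - ∑ i ∈ univ.filter (fun i => e i = false), (α i + β i) else 0)
          + ∑ i, (if (x ≤ y) ∧ e i = false ∧ y = Function.update e i true then β i else 0) := by
      intro y
      by_cases hy : x ≤ y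
      · simp only [zeta, Matrix.of_apply, hy, if_true, one_mul, Gm, true_and]
      · simp [zeta, hy]
    rw [Finset.sum_congr rfl (fun y _ => point y), Finset.sum_add_distrib]
    congr 1
    · rw [sum_ite_and_eq' (fun y => x ≤ y) e]
    · rw [Finset.sum_comm]
      refine Finset.sum_congr rfl fun i _ => ?_
      rw [sum_ite_and_eq (fun y => x ≤ y) (e i = false) (Function.update e i true)]
  rw [hL, hR]
  by_cases hxe : x ≤ e
  · rw [if_pos hxe, if_pos hxe]
    have per : ∀ i ∈ (univ : Finset (Fin d)),
        ((if Function.update x i true ≤ e ∧ x i = false then α i else 0)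
          + (if Function.update x i false ≤ e ∧ x i = true then β i else 0))
          - (if x i = false then α i else 0) - (if x i = true then β i else 0)
        = (if x ≤ Function.update e i true ∧ e i = false then β i else 0)
          - (if e i = false then α i + β i else 0) := by
      intro i _
      have hxi := hxe i
      have h1 : Function.update x i true ≤ e ↔ e i = true := by
        constructor
        · intro h
          have := h i
          rw [Function.update_self] at this
          exact le_antisymm (Bool.le_true _) this
        · intro h j
          rcases eq_or_ne j i with rfl | hj
          · rw [Function.update_self, h]
          · rw [Function.update_of_ne hj]; exact hxe j
      have h2 : Function.update x i false ≤ e := by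
        intro j
        rcases eq_or_ne j i with rfl | hj
        · rw [Function.update_self]; exact Bool.false_le _
        · rw [Function.update_of_ne hj]; exact hxe j
      have h3 : x ≤ Function.update e i true := by
        intro j
        rcases eq_or_ne j i with rfl | hj
        · rw [Function.update_self]; exact Bool.le_true _
        · rw [Function.update_of_ne hj]; exact hxe j
      simp only [h1, h2, h3, true_and, and_true]
      have hcase : ¬(x i = true ∧ e i = false) := by
        rintro ⟨h1', h2'⟩
        rw [h1', h2'] at hxi
        exact absurd hxi (by decide : ¬((true : Bool) ≤ false))
      cases hx : x i <;> cases he : e i <;> simp_all <;> ring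
    have hsum := Finset.sum_congr rfl per
    rw [Finset.sum_sub_distrib, Finset.sum_sub_distrib, Finset.sum_add_distrib,
      Finset.sum_sub_distrib] at hsum
    rw [Finset.sum_filter, Finset.sum_filter, Finset.sum_filter] at *
    rw [Finset.sum_add_distrib]
    linarith [hsum]
  · rw [if_neg hxe, if_neg hxe]
    rw [zero_add, zero_add]
    refine Finset.sum_congr rfl fun i _ => ?_
    have hA : ¬(Function.update x i true ≤ e ∧ x i = false) := by
      rintro ⟨h1, _⟩
      exact hxe (le_trans (le_update_true x i) h1)
    have hBC : (Function.update x i false ≤ e ∧ x i = true)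
        ↔ (x ≤ Function.update e i true ∧ e i = false) := by
      constructor
      · rintro ⟨h1, h2⟩
        have hei : e i = false := by
          cases he : e i
          · rfl
          · exfalso; apply hxe; intro j
            rcases eq_or_ne j i with rfl | hj
            · rw [h2, he]
            · have := h1 j; rwa [Function.update_of_ne hj] at this
        refine ⟨fun j => ?_, hei⟩
        rcases eq_or_ne j i with rfl | hj
        · rw [Function.update_self]; exact Bool.le_true _
        · rw [Function.update_of_ne hj]
          have := h1 j; rwa [Function.update_of_ne hj] at this
      · rintro ⟨h1, h2⟩
        have hxi : x i = true := by
          cases hx : x i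
          · exfalso; apply hxe; intro j
            rcases eq_or_ne j i with rfl | hj
            · rw [hx]; exact Bool.false_le _
            · have := h1 j; rwa [Function.update_of_ne hj] at this
          · rfl
        refine ⟨fun j => ?_, hxi⟩
        rcases eq_or_ne j i with rfl | hj
        · rw [Function.update_self]; exact Bool.false_le _
        · rw [Function.update_of_ne hj]
          have := h1 j; rwa [Function.update_of_ne hj] at this
    rw [if_neg hA, zero_add]
    exact if_congr hBC rfl rfl


lemma sum_ite_and_eq2 {g : Type*} [Fintype g] [DecidableEq g]
    (R : Prop) [Decidable R] (c : g) (f : g → ℝ) :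
    (∑ a, if R ∧ a = c then f a else 0) = if R then f c else 0 := by
  rw [Finset.sum_eq_single c]
  · simp
  · intro b _ hb; simp [hb]
  · simp

lemma ratio_helper (Q a b : ℝ) (hQ : 0 < Q) (hb : 0 < b) (hab : 0 < a + b) :
    Q / (b / (a + b) * Q) * b = a + b := by
  field_simp

/-- for the cube walk with `Σ α_i + Σ β_i ≤ 1`, the strong
stationary dual `P*(e,e') = (H(e')/H(e)) Σ_{e'' ≥ e'} μ(e',e'') P(e'',{e}↓)`
(the walk is reversible, so `←P = P`) moves only upwards to nearest neighbors:
`P*(e,e+s_i) = α_i + β_i` for `e_i = 0`, `P*(e,e) = 1 − Σ_{i: e_i=0}(α_i+β_i)`,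
all other entries vanish, and `P*` is stochastic. -/
theorem stmt15 {d : ℕ} (α β : Fin d → ℝ)
    (hα : ∀ i, 0 < α i) (hβ : ∀ i, 0 < β i)
    (hsum : (∑ i, α i) + (∑ i, β i) ≤ 1)
    (H : (Fin d → Bool) → ℝ)
    (hH : ∀ e, H e = ∑ e' ∈ univ.filter (fun e' => e' ≤ e), cubePi α β e')
    (Pd : Matrix (Fin d → Bool) (Fin d → Bool) ℝ)
    (hPd : ∀ e e', Pd e e' = (H e' / H e) *
      ∑ e'' ∈ univ.filter (fun e'' => e' ≤ e''), (zeta (Fin d → Bool))⁻¹ e' e'' *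
        (∑ e''' ∈ univ.filter (fun e''' => e''' ≤ e), cubeP α β e'' e''')) :
    (∀ (e : Fin d → Bool) (i : Fin d), e i = false →
        Pd e (Function.update e i true) = α i + β i) ∧
    (∀ e : Fin d → Bool,
        Pd e e = 1 - ∑ i ∈ univ.filter (fun i => e i = false), (α i + β i)) ∧
    (∀ e e' : Fin d → Bool, e' ≠ e →
        (¬ ∃ i, e i = false ∧ e' = Function.update e i true) → Pd e e' = 0) ∧
    IsStochastic Pd := by
  
  classical
  have hab : ∀ i, (0 : ℝ) < α i + β i := fun i => add_pos (hα i) (hβ i)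
  have Hprod : ∀ e : Fin d → Bool,
      H e = ∏ i ∈ univ.filter (fun i => e i = false), (β i / (α i + β i)) := by
    intro e
    rw [hH]
    have hset : univ.filter (fun e' : Fin d → Bool => e' ≤ e)
        = Fintype.piFinset (fun i => univ.filter (fun b => b ≤ e i)) := by
      ext x
      simp [Fintype.mem_piFinset, Pi.le_def]
    rw [hset]
    unfold cubePi
    rw [← Finset.prod_univ_sum (fun i => univ.filter (fun b => b ≤ e i))
      (fun i b => if b = true then α i / (α i + β i) else β i / (α i + β i))]
    rw [Finset.prod_filter]
    refine Finset.prod_congr rfl fun i _ => ?_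
    cases he : e i
    · have hs : univ.filter (fun b : Bool => b ≤ false) = {false} := by decide
      rw [hs, Finset.sum_singleton]
      simp
    · have hs : univ.filter (fun b : Bool => b ≤ true) = univ := by decide
      rw [hs, Fintype.sum_bool]
      rw [if_neg (by decide : ¬(false = true)), if_neg (by decide : ¬(true = false)),
        if_pos (rfl : true = true)]
      rw [← add_div, div_self (hab i).ne']
  have Hpos : ∀ e : Fin d → Bool, 0 < H e := by
    intro e
    rw [Hprod]
    exact Finset.prod_pos fun i _ => div_pos (hβ i) (hab i)
  have key : ∀ e e' : Fin d → Bool, Pd e e' = (H e' / H e) * Gm α β e e' := by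
    intro e e'
    rw [hPd, zeta_inv_eq_s15]
    congr 1
    have hext : ∑ x ∈ univ.filter (fun x => e' ≤ x), Mu d e' x *
          (∑ z ∈ univ.filter (fun z => z ≤ e), cubeP α β x z)
        = ∑ x, Mu d e' x *
          (∑ z ∈ univ.filter (fun z => z ≤ e), cubeP α β x z) := by
      apply Finset.sum_subset (Finset.filter_subset _ _)
      intro x _ hx
      simp only [mem_filter, mem_univ, true_and] at hx
      simp [Mu, hx]
    rw [hext]
    have step1 : ∑ x, Mu d e' x *
          (∑ z ∈ univ.filter (fun z => z ≤ e), cubeP α β x z)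
        = ∑ x, Mu d e' x * ∑ y, zeta (Fin d → Bool) x y * Gm α β e y :=
      Finset.sum_congr rfl fun x _ => by rw [FG]
    rw [step1]
    simp_rw [Finset.mul_sum]
    rw [Finset.sum_comm]
    simp_rw [← mul_assoc, ← Finset.sum_mul]
    have step2 : ∀ y, (∑ x, Mu d e' x * zeta (Fin d → Bool) x y)
        = (1 : Matrix (Fin d → Bool) (Fin d → Bool) ℝ) e' y := fun y => by
      rw [← Matrix.mul_apply, Mu_mul_zeta]
    simp_rw [step2, Matrix.one_apply, ite_mul, one_mul, zero_mul]
    rw [Finset.sum_ite_eq _ e' (fun y => Gm α β e y)]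
    simp
  have G_up : ∀ (e : Fin d → Bool) (i : Fin d), e i = false →
      Gm α β e (Function.update e i true) = β i := by
    intro e i hei
    unfold Gm
    have hne : Function.update e i true ≠ e := by
      intro hc
      have hci := congrFun hc i
      rw [Function.update_self, hei] at hci
      exact Bool.noConfusion hci
    rw [if_neg hne, zero_add]
    rw [Finset.sum_eq_single i]
    · simp [hei]
    · intro j _ hj
      rw [if_neg]
      rintro ⟨hj1, hj2⟩
      have hci := congrFun hj2 i
      rw [Function.update_self, Function.update_of_ne (Ne.symm hj), hei] at hci
      exact Bool.noConfusion hci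
    · simp
  have G_self : ∀ e : Fin d → Bool,
      Gm α β e e = 1 - ∑ i ∈ univ.filter (fun i => e i = false), (α i + β i) := by
    intro e
    unfold Gm
    rw [if_pos rfl]
    have hz : ∀ i ∈ (univ : Finset (Fin d)),
        (if e i = false ∧ e = Function.update e i true then β i else 0) = 0 := by
      intro i _
      rw [if_neg]
      rintro ⟨h1, h2⟩
      have hci := congrFun h2 i
      rw [Function.update_self, h1] at hci
      exact Bool.noConfusion hci
    rw [Finset.sum_congr rfl hz]
    simp
  have G_zero : ∀ e x : Fin d → Bool, x ≠ e →
      (¬ ∃ i, e i = false ∧ x = Function.update e i true) → Gm α β e x = 0 := by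
    intro e x hne hnex
    unfold Gm
    rw [if_neg hne, zero_add]
    apply Finset.sum_eq_zero
    intro i _
    rw [if_neg]
    rintro ⟨h1, h2⟩
    exact hnex ⟨i, h1, h2⟩
  have hup : ∀ (e : Fin d → Bool) (i : Fin d), e i = false →
      H (Function.update e i true) / H e * β i = α i + β i := by
    intro e i hei
    have hfil : univ.filter (fun j => Function.update e i true j = false)
        = (univ.filter (fun j => e j = false)).erase i := by
      ext j
      simp only [mem_filter, mem_univ, true_and, Finset.mem_erase, Function.update_apply]
      by_cases hj : j = i <;> simp [hj]
    have hi' : i ∈ univ.filter (fun j => e j = false) := by simp [hei]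
    have hQpos : (0:ℝ) < ∏ j ∈ (univ.filter (fun j => e j = false)).erase i,
        (β j / (α j + β j)) := Finset.prod_pos fun j _ => div_pos (hβ j) (hab j)
    have hP : H e = (β i / (α i + β i)) *
        ∏ j ∈ (univ.filter (fun j => e j = false)).erase i, (β j / (α j + β j)) := by
      rw [Hprod, ← Finset.mul_prod_erase _ _ hi']
    have hQ : H (Function.update e i true)
        = ∏ j ∈ (univ.filter (fun j => e j = false)).erase i, (β j / (α j + β j)) := by
      rw [Hprod, hfil]
    rw [hP, hQ]
    exact ratio_helper _ _ _ hQpos (hβ i) (hab i)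
  refine ⟨?_, ?_, ?_, ?_, ?_⟩
  · intro e i hei
    rw [key, G_up e i hei]
    exact hup e i hei
  · intro e
    rw [key, G_self, div_self (Hpos e).ne', one_mul]
  · intro e x hne hnex
    rw [key, G_zero e x hne hnex, mul_zero]
  · intro e x
    rw [key]
    apply mul_nonneg (div_nonneg (Hpos x).le (Hpos e).le)
    unfold Gm
    apply add_nonneg
    · split_ifs with h
      · have h1 : ∑ i ∈ univ.filter (fun i => e i = false), (α i + β i)
            ≤ ∑ i, (α i + β i) :=
          Finset.sum_le_sum_of_subset_of_nonneg (Finset.filter_subset _ _)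
            (fun i _ _ => (hab i).le)
        have h2 : ∑ i, (α i + β i) = (∑ i, α i) + (∑ i, β i) :=
          Finset.sum_add_distrib
        linarith
      · exact le_refl 0
    · apply Finset.sum_nonneg
      intro i _
      split_ifs with h
      · exact (hβ i).le
      · exact le_refl 0
  · intro e
    have expand : ∀ x : Fin d → Bool, Pd e x
        = (if x = e then (H x / H e) *
            (1 - ∑ i ∈ univ.filter (fun i => e i = false), (α i + β i)) else 0)
          + ∑ i, (if e i = false ∧ x = Function.update e i true
              then (H x / H e) * β i else 0) := by
      intro x
      rw [key]
      unfold Gm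
      rw [mul_add, Finset.mul_sum]
      congr 1
      · split_ifs <;> simp
      · refine Finset.sum_congr rfl fun i _ => ?_
        split_ifs <;> simp
    rw [Finset.sum_congr rfl (fun x _ => expand x), Finset.sum_add_distrib]
    have first : ∑ x : Fin d → Bool, (if x = e then (H x / H e) *
        (1 - ∑ i ∈ univ.filter (fun i => e i = false), (α i + β i)) else 0)
        = 1 - ∑ i ∈ univ.filter (fun i => e i = false), (α i + β i) := by
      rw [Finset.sum_ite_eq' _ e (fun x => (H x / H e) *
        (1 - ∑ i ∈ univ.filter (fun i => e i = false), (α i + β i)))]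
      simp [div_self (Hpos e).ne']
    have second : ∑ x : Fin d → Bool, ∑ i, (if e i = false ∧
          x = Function.update e i true then (H x / H e) * β i else 0)
        = ∑ i ∈ univ.filter (fun i => e i = false), (α i + β i) := by
      rw [Finset.sum_comm, Finset.sum_filter]
      refine Finset.sum_congr rfl fun i _ => ?_
      rw [sum_ite_and_eq2 (e i = false) (Function.update e i true)
        (fun x => (H x / H e) * β i)]
      split_ifs with h
      · exact hup e i h
      · rfl
    rw [first, second]
    ring
end
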